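/- For h > 0 with h ≠ 1 and real p (p ≠ 0, 1), the generalized Kantorovich constant satisfies the symmetry K(h,p) = K(h,1-p). -/

import Mathlib

open scoped ComplexOrder Kronecker

/-- Matrix power via the continuous functional calculus. -/
noncomputable def mpow {n : Type*} [Fintype n] [DecidableEq n]
    (A : Matrix n n ℂ) (p : ℝ) : Matrix n n ℂ :=
  cfc (fun x : ℝ => x ^ p) A

/-- The Loewner order on matrices. -/
def LoewnerLE {n : Type*} [Fintype n] (A B : Matrix n n ℂ) : Prop :=
  (B - A).PosSemidef

/-- The matrix geometric mean `A # B = A^{1/2}(A^{-1/2} B A^{-1/2})^{1/2} A^{1/2}`. -/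
noncomputable def geo {n : Type*} [Fintype n] [DecidableEq n]
    (A B : Matrix n n ℂ) : Matrix n n ℂ :=
  mpow A (1/2) * mpow (mpow A (-(1/2)) * B * mpow A (-(1/2))) (1/2) * mpow A (1/2)

/-- The generalized Kantorovich constant. -/
noncomputable def Kconst (h p : ℝ) : ℝ :=
  ((h ^ p - h) / ((p - 1) * (h - 1))) *
    (((p - 1) / p) * ((h ^ p - 1) / (h ^ p - h))) ^ p

/-- The Specht ratio. -/
noncomputable def Specht (h : ℝ) : ℝ :=
  if h = 1 then 1 else (h - 1) * h ^ (1 / (h - 1)) / (Real.exp 1 * Real.log h)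

private lemma sign_key (h : ℝ) (hh : 0 < h) (hh1 : h ≠ 1) {a b : ℝ} (hab : a ≠ b) :
    0 < (h ^ a - h ^ b) * ((a - b) * Real.log h) := by
  rcases hh1.lt_or_gt with h1 | h1
  · have hl : Real.log h < 0 := Real.log_neg hh h1
    rcases hab.lt_or_gt with hab' | hab'
    · exact mul_pos (sub_pos.mpr (Real.rpow_lt_rpow_of_exponent_gt hh h1 hab'))
        (mul_pos_of_neg_of_neg (sub_neg.mpr hab') hl)
    · exact mul_pos_of_neg_of_neg
        (sub_neg.mpr (Real.rpow_lt_rpow_of_exponent_gt hh h1 hab'))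
        (mul_neg_of_pos_of_neg (sub_pos.mpr hab') hl)
  · have hl : 0 < Real.log h := Real.log_pos h1
    rcases hab.lt_or_gt with hab' | hab'
    · exact mul_pos_of_neg_of_neg
        (sub_neg.mpr (Real.rpow_lt_rpow_of_exponent_lt h1 hab'))
        (mul_neg_of_neg_of_pos (sub_neg.mpr hab') hl)
    · exact mul_pos (sub_pos.mpr (Real.rpow_lt_rpow_of_exponent_lt h1 hab'))
        (mul_pos (sub_pos.mpr hab') hl)

theorem kantorovich_symm_one_sub (h p : ℝ) (hh : 0 < h) (hh1 : h ≠ 1)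
    (hp0 : p ≠ 0) (hp1 : p ≠ 1) :
    Kconst h p = Kconst h (1 - p) := by
  have hne : h ≠ 0 := ne_of_gt hh
  have hhm : h - 1 ≠ 0 := sub_ne_zero.mpr hh1
  have hp1' : p - 1 ≠ 0 := sub_ne_zero.mpr hp1
  have h1p : (1 : ℝ) - p ≠ 0 := sub_ne_zero.mpr (Ne.symm hp1)
  set L := Real.log h with hLdef
  set t := h ^ p with htdef
  have ht0 : 0 < t := Real.rpow_pos_of_pos hh p
  have ht0' : t ≠ 0 := ne_of_gt ht0
  have k1 : 0 < (t - 1) * (p * L) := by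
    have := sign_key h hh hh1 (a := p) (b := 0) hp0
    simpa [Real.rpow_zero] using this
  have k2 : 0 < (t - h) * ((p - 1) * L) := by
    have := sign_key h hh hh1 (a := p) (b := 1) hp1
    simpa [Real.rpow_one] using this
  have ht1 : t - 1 ≠ 0 := by
    intro e; rw [e] at k1; simp at k1
  have hth : t - h ≠ 0 := by
    intro e; rw [e] at k2; simp at k2
  have hL : L ≠ 0 := by
    intro e; rw [e] at k1; simp at k1
  set B := ((p - 1) / p) * ((t - 1) / (t - h)) with hBdef
  have hB : 0 < B := by
    have h2 : 0 < ((t - 1) * (p * L)) * ((t - h) * ((p - 1) * L)) := mul_pos k1 k2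
    have e : B = (((t - 1) * (p * L)) * ((t - h) * ((p - 1) * L))) /
        ((p * (t - h) * L) * (p * (t - h) * L)) := by
      rw [hBdef]; field_simp
    rw [e]
    exact div_pos h2 (mul_self_pos.mpr (mul_ne_zero (mul_ne_zero hp0 hth) hL))
  have hB0 : B ≠ 0 := ne_of_gt hB
  have hhB : 0 < h * B := mul_pos hh hB
  have hhp : h ^ (1 - p) = h / t := by
    rw [Real.rpow_sub hh, Real.rpow_one]
  have e1 : h / t - h = (h * (1 - t)) / t := by field_simp
  have e2 : h / t - 1 = (h - t) / t := by field_simp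
  have h1t : (1 : ℝ) - t ≠ 0 := fun e => ht1 (by linarith [sub_eq_zero.mp e])
  have hht : h - t ≠ 0 := fun e => hth (by linarith [sub_eq_zero.mp e])
  have base_eq : ((1 - p - 1) / (1 - p)) * ((h ^ (1 - p) - 1) / (h ^ (1 - p) - h)) =
      (h * B)⁻¹ := by
    rw [hhp, e1, e2, hBdef]
    field_simp
    ring
  have pow_eq : ((h * B)⁻¹) ^ (1 - p) = t * B ^ p / (h * B) := by
    rw [Real.inv_rpow hhB.le, Real.rpow_sub hhB, Real.rpow_one,
      Real.mul_rpow hh.le hB.le, ← htdef, inv_div]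
  unfold Kconst
  rw [← htdef, base_eq, pow_eq, hhp, e1]
  generalize B ^ p = X
  clear_value t
  rw [hBdef]
  clear_value B
  field_simp
  linear_combination (X - X * t) * mul_inv_cancel₀ hp0
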